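/- Suppose f : ℕⁿ → K satisfies the difference equation Σ_{0 ≤ α ≤ m} c_α f(x+α) = 0 for every x ∈ ℕⁿ. Let Φ = Σ_{τ ∈ X₀} f(τ) · w^{τ+I} be the generating series of the initial data. Then in K⟦w₁,…,wₙ⟧ one has Q · G = Q · Φ − Σ_{τ ∈ X₀} ( Σ_{α ≤ m, α ≤ τ} c_α · w^{m−α} ) · f(τ) · w^{τ+I}, where the outer sum on the right is a summable family of formal power series. -/

import Mathlib

/-- Formula (7) of Theorem 1: if `f : ℕⁿ → K` satisfies the difference equation
`Σ_{0 ≤ α ≤ m} c_α f(x+α) = 0`, then for the generating series `G = Σ_x f(x) w^{x+I}`,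
the generating series `Φ = Σ_{τ ∈ X₀} f(τ) w^{τ+I}` of the initial data and
`Q = Σ_{α ≤ m} c_α w^{m-α}` one has
`Q·G = Q·Φ − Σ_{τ ∈ X₀} (Σ_{α ≤ m, α ≤ τ} c_α w^{m−α}) · f(τ) · w^{τ+I}`,
the sum over `X₀` being a summable family of formal power series (for the
coefficientwise, i.e. product of discrete, topology). -/
theorem generating_series_formula_three
    (n : ℕ) (hn : 1 ≤ n) (K : Type*) [Field K]
    (m : Fin n →₀ ℕ) (c : (Fin n →₀ ℕ) → K) (f : (Fin n →₀ ℕ) → K)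
    (hf : ∀ x : Fin n →₀ ℕ, ∑ α ∈ Finset.Iic m, c α * f (x + α) = 0)
    (I : Fin n →₀ ℕ) (hI : ∀ j, I j = 1)
    (G : MvPowerSeries (Fin n) K)
    (hG : ∀ e : Fin n →₀ ℕ,
      MvPowerSeries.coeff e G = if I ≤ e then f (e - I) else 0)
    (Φ : MvPowerSeries (Fin n) K)
    (hΦ : ∀ e : Fin n →₀ ℕ,
      MvPowerSeries.coeff e Φ = if I ≤ e ∧ ¬ m ≤ e - I then f (e - I) else 0)
    (Q : MvPowerSeries (Fin n) K)
    (hQ : Q = ∑ α ∈ Finset.Iic m, (MvPowerSeries.monomial (m - α)) (c α)) :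
    let _inst : TopologicalSpace (MvPowerSeries (Fin n) K) :=
      @Pi.topologicalSpace (Fin n →₀ ℕ) (fun _ => K) (fun _ => ⊥)
    ∃ S : MvPowerSeries (Fin n) K,
      HasSum (fun τ : {x : Fin n →₀ ℕ // ¬ m ≤ x} =>
        (∑ α ∈ (Finset.Iic m).filter (fun α => α ≤ (τ : Fin n →₀ ℕ)),
            (MvPowerSeries.monomial (m - α)) (c α)) *
          (MvPowerSeries.monomial ((τ : Fin n →₀ ℕ) + I)) (f τ)) S ∧
      Q * G = Q * Φ - S := by
  intro _inst
  classical
  refine ⟨Q * Φ - Q * G, ?_, by ring⟩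
  letI : TopologicalSpace K := ⊥
  have key : ∀ e : Fin n →₀ ℕ,
      HasSum (fun τ : {x : Fin n →₀ ℕ // ¬ m ≤ x} =>
        MvPowerSeries.coeff e
          ((∑ α ∈ (Finset.Iic m).filter (fun α => α ≤ (τ : Fin n →₀ ℕ)),
              (MvPowerSeries.monomial (m - α)) (c α)) *
            (MvPowerSeries.monomial ((τ : Fin n →₀ ℕ) + I)) (f τ)))
        (MvPowerSeries.coeff e (Q * Φ - Q * G)) := by
    intro e
    -- coefficient of a single term of the family
    have hterm : ∀ τ : {x : Fin n →₀ ℕ // ¬ m ≤ x},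
        MvPowerSeries.coeff e
          ((∑ α ∈ (Finset.Iic m).filter (fun α => α ≤ (τ : Fin n →₀ ℕ)),
              (MvPowerSeries.monomial (m - α)) (c α)) *
            (MvPowerSeries.monomial ((τ : Fin n →₀ ℕ) + I)) (f τ)) =
        ∑ α ∈ Finset.Iic m,
          if α ≤ (τ : Fin n →₀ ℕ) ∧ e = (m - α) + ((τ : Fin n →₀ ℕ) + I)
          then c α * f (τ : Fin n →₀ ℕ) else 0 := by
      intro τ
      rw [Finset.sum_mul, map_sum, Finset.sum_filter]
      refine Finset.sum_congr rfl fun α _ => ?_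
      rw [MvPowerSeries.monomial_mul_monomial, MvPowerSeries.coeff_monomial, ite_and]
    -- coefficient of Q * G
    have hQG : MvPowerSeries.coeff e (Q * G) =
        ∑ α ∈ Finset.Iic m,
          if (m - α) + I ≤ e then c α * f (e - ((m - α) + I)) else 0 := by
      rw [hQ, Finset.sum_mul, map_sum]
      refine Finset.sum_congr rfl fun α _ => ?_
      rw [MvPowerSeries.coeff_monomial_mul, hG]
      by_cases h1 : (m - α) + I ≤ e
      · have hd : m - α ≤ e := le_trans le_self_add h1
        have hI' : I ≤ e - (m - α) := by
          rw [Finsupp.le_def]; intro j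
          have := Finsupp.le_def.mp h1 j
          simp only [Finsupp.add_apply, Finsupp.tsub_apply] at this ⊢
          omega
        rw [if_pos hd, if_pos hI', if_pos h1, tsub_tsub]
      · rw [if_neg h1]
        by_cases hd : m - α ≤ e
        · have hI' : ¬ I ≤ e - (m - α) := by
            intro hI'
            apply h1
            rw [Finsupp.le_def]; intro j
            have h1j := Finsupp.le_def.mp hd j
            have h2j := Finsupp.le_def.mp hI' j
            simp only [Finsupp.tsub_apply] at h1j h2j
            simp only [Finsupp.add_apply, Finsupp.tsub_apply]
            omega
          rw [if_pos hd, if_neg hI', mul_zero]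
        · rw [if_neg hd]
    -- coefficient of Q * Φ
    have hQΦ : MvPowerSeries.coeff e (Q * Φ) =
        ∑ α ∈ Finset.Iic m,
          if (m - α) + I ≤ e ∧ ¬ m ≤ e - ((m - α) + I)
          then c α * f (e - ((m - α) + I)) else 0 := by
      rw [hQ, Finset.sum_mul, map_sum]
      refine Finset.sum_congr rfl fun α _ => ?_
      rw [MvPowerSeries.coeff_monomial_mul, hΦ]
      by_cases h1 : (m - α) + I ≤ e
      · have hd : m - α ≤ e := le_trans le_self_add h1
        have hI' : I ≤ e - (m - α) := by
          rw [Finsupp.le_def]; intro j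
          have := Finsupp.le_def.mp h1 j
          simp only [Finsupp.add_apply, Finsupp.tsub_apply] at this ⊢
          omega
        rw [if_pos hd, tsub_tsub]
        by_cases h2 : m ≤ e - (m - α + I)
        · rw [if_neg (fun h => h.2 h2), if_neg (fun h => h.2 h2), mul_zero]
        · rw [if_pos ⟨hI', h2⟩, if_pos ⟨h1, h2⟩]
      · by_cases hd : m - α ≤ e
        · have hI' : ¬ I ≤ e - (m - α) := by
            intro hI'
            apply h1
            rw [Finsupp.le_def]; intro j
            have h1j := Finsupp.le_def.mp hd j
            have h2j := Finsupp.le_def.mp hI' j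
            simp only [Finsupp.tsub_apply] at h1j h2j
            simp only [Finsupp.add_apply, Finsupp.tsub_apply]
            omega
          rw [if_pos hd,
            if_neg (show ¬(I ≤ e - (m - α) ∧ ¬m ≤ e - (m - α) - I) from fun h => hI' h.1),
            mul_zero,
            if_neg (show ¬(m - α + I ≤ e ∧ ¬m ≤ e - (m - α + I)) from fun h => h1 h.1)]
        · rw [if_neg hd,
            if_neg (show ¬(m - α + I ≤ e ∧ ¬m ≤ e - (m - α + I)) from fun h => h1 h.1)]
    -- the supporting finite set
    set T : Finset {x : Fin n →₀ ℕ // ¬ m ≤ x} :=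
      (Finset.Iic e).subtype (fun x => ¬ m ≤ x) with hT
    have h0 : ∀ τ : {x : Fin n →₀ ℕ // ¬ m ≤ x}, τ ∉ T →
        MvPowerSeries.coeff e
          ((∑ α ∈ (Finset.Iic m).filter (fun α => α ≤ (τ : Fin n →₀ ℕ)),
              (MvPowerSeries.monomial (m - α)) (c α)) *
            (MvPowerSeries.monomial ((τ : Fin n →₀ ℕ) + I)) (f τ)) = 0 := by
      intro τ hτ
      rw [hterm]
      refine Finset.sum_eq_zero fun α _ => if_neg ?_
      rintro ⟨-, h3⟩
      apply hτ
      rw [hT, Finset.mem_subtype, Finset.mem_Iic]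
      rw [Finsupp.le_def]; intro j
      have := congrArg (fun u : Fin n →₀ ℕ => u j) h3
      simp only [Finsupp.add_apply] at this
      omega
    -- the key identity
    have main : (∑ τ ∈ T, MvPowerSeries.coeff e
          ((∑ α ∈ (Finset.Iic m).filter (fun α => α ≤ (τ : Fin n →₀ ℕ)),
              (MvPowerSeries.monomial (m - α)) (c α)) *
            (MvPowerSeries.monomial ((τ : Fin n →₀ ℕ) + I)) (f τ))) =
        MvPowerSeries.coeff e (Q * Φ) - MvPowerSeries.coeff e (Q * G) := by
      have hE : ∑ α ∈ Finset.Iic m,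
          (if m + I ≤ e then c α * f ((e - (m + I)) + α) else 0) = 0 := by
        by_cases h : m + I ≤ e
        · simp only [if_pos h]; exact hf (e - (m + I))
        · simp [if_neg h]
      calc (∑ τ ∈ T, MvPowerSeries.coeff e
              ((∑ α ∈ (Finset.Iic m).filter (fun α => α ≤ (τ : Fin n →₀ ℕ)),
                  (MvPowerSeries.monomial (m - α)) (c α)) *
                (MvPowerSeries.monomial ((τ : Fin n →₀ ℕ) + I)) (f τ)))
          = ∑ τ ∈ T, ∑ α ∈ Finset.Iic m,
              (if α ≤ (τ : Fin n →₀ ℕ) ∧ e = (m - α) + ((τ : Fin n →₀ ℕ) + I)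
               then c α * f (τ : Fin n →₀ ℕ) else 0) :=
            Finset.sum_congr rfl fun τ _ => hterm τ
        _ = ∑ α ∈ Finset.Iic m, ∑ τ ∈ T,
              (if α ≤ (τ : Fin n →₀ ℕ) ∧ e = (m - α) + ((τ : Fin n →₀ ℕ) + I)
               then c α * f (τ : Fin n →₀ ℕ) else 0) := Finset.sum_comm
        _ = ∑ α ∈ Finset.Iic m,
              ((if (m - α) + I ≤ e ∧ ¬ m ≤ e - ((m - α) + I)
                then c α * f (e - ((m - α) + I)) else 0)
               - (if (m - α) + I ≤ e then c α * f (e - ((m - α) + I)) else 0)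
               + (if m + I ≤ e then c α * f ((e - (m + I)) + α) else 0)) := by
            refine Finset.sum_congr rfl fun α hα => ?_
            have hαm : α ≤ m := Finset.mem_Iic.mp hα
            by_cases h1 : (m - α) + I ≤ e
            · set t : Fin n →₀ ℕ := e - ((m - α) + I) with htdef
              have ht : (m - α) + (t + I) = e := by
                ext j
                have h1j := Finsupp.le_def.mp h1 j
                simp only [htdef, Finsupp.add_apply, Finsupp.tsub_apply] at h1j ⊢
                omega
              have htle : t ≤ e := by
                rw [Finsupp.le_def]; intro j
                simp only [htdef, Finsupp.tsub_apply]; omega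
              have huniq : ∀ σ : Fin n →₀ ℕ, e = (m - α) + (σ + I) → σ = t := by
                intro σ hσ
                ext j
                have ha := congrArg (fun u : Fin n →₀ ℕ => u j) hσ
                have hb := congrArg (fun u : Fin n →₀ ℕ => u j) ht
                simp only [htdef, Finsupp.add_apply, Finsupp.tsub_apply] at ha hb ⊢
                omega
              have hF5 : α ≤ t ↔ m + I ≤ e := by
                simp only [Finsupp.le_def, htdef, Finsupp.tsub_apply, Finsupp.add_apply]
                constructor
                · intro h j
                  have h1j := Finsupp.le_def.mp h1 j
                  have hαj := Finsupp.le_def.mp hαm j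
                  have := h j
                  simp only [Finsupp.add_apply, Finsupp.tsub_apply] at *
                  omega
                · intro h j
                  have hαj := Finsupp.le_def.mp hαm j
                  have := h j
                  omega
              by_cases h2 : m ≤ t
              · have hmI : m + I ≤ e := hF5.mp (le_trans hαm h2)
                have hL : (∑ τ ∈ T,
                    (if α ≤ (τ : Fin n →₀ ℕ) ∧ e = (m - α) + ((τ : Fin n →₀ ℕ) + I)
                     then c α * f (τ : Fin n →₀ ℕ) else 0)) = 0 := by
                  refine Finset.sum_eq_zero fun τ _ => if_neg ?_
                  rintro ⟨-, h3⟩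
                  exact τ.2 ((huniq _ h3) ▸ h2)
                have hte : (e - (m + I)) + α = t := by
                  ext j
                  have h1j := Finsupp.le_def.mp hmI j
                  have hαj := Finsupp.le_def.mp hαm j
                  simp only [htdef, Finsupp.add_apply, Finsupp.tsub_apply] at *
                  omega
                rw [hL, if_neg (by rintro ⟨-, h4⟩; exact h4 h2), if_pos h1, if_pos hmI, hte]
                ring
              · have hτ0 : (⟨t, h2⟩ : {x : Fin n →₀ ℕ // ¬ m ≤ x}) ∈ T := by
                  rw [hT, Finset.mem_subtype, Finset.mem_Iic]; exact htle
                have hL : (∑ τ ∈ T,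
                    (if α ≤ (τ : Fin n →₀ ℕ) ∧ e = (m - α) + ((τ : Fin n →₀ ℕ) + I)
                     then c α * f (τ : Fin n →₀ ℕ) else 0)) =
                    (if α ≤ t then c α * f t else 0) := by
                  rw [Finset.sum_eq_single_of_mem _ hτ0]
                  · simp only [if_pos ht.symm]
                    by_cases h4 : α ≤ t
                    · rw [if_pos ⟨h4, ht.symm⟩, if_pos h4]
                    · rw [if_neg (by rintro ⟨h5, -⟩; exact h4 h5), if_neg h4]
                  · intro τ _ hne
                    refine if_neg ?_
                    rintro ⟨-, h3⟩
                    exact hne (Subtype.ext (huniq _ h3))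
                by_cases h3 : m + I ≤ e
                · have hte : (e - (m + I)) + α = t := by
                    ext j
                    have h1j := Finsupp.le_def.mp h3 j
                    have hαj := Finsupp.le_def.mp hαm j
                    simp only [htdef, Finsupp.add_apply, Finsupp.tsub_apply] at *
                    omega
                  rw [hL, if_pos (hF5.mpr h3), if_pos ⟨h1, h2⟩, if_pos h1, if_pos h3, hte]
                  ring
                · rw [hL, if_neg (fun h => h3 (hF5.mp h)), if_pos ⟨h1, h2⟩, if_pos h1,
                    if_neg h3]
                  ring
            · have hL : (∑ τ ∈ T,
                  (if α ≤ (τ : Fin n →₀ ℕ) ∧ e = (m - α) + ((τ : Fin n →₀ ℕ) + I)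
                   then c α * f (τ : Fin n →₀ ℕ) else 0)) = 0 := by
                refine Finset.sum_eq_zero fun τ _ => if_neg ?_
                rintro ⟨-, h3⟩
                apply h1
                rw [Finsupp.le_def]; intro j
                have := congrArg (fun u : Fin n →₀ ℕ => u j) h3
                simp only [Finsupp.add_apply] at this ⊢
                omega
              have hmI : ¬ m + I ≤ e := by
                intro h
                apply h1
                rw [Finsupp.le_def]; intro j
                have := Finsupp.le_def.mp h j
                have hαj := Finsupp.le_def.mp hαm j
                simp only [Finsupp.add_apply, Finsupp.tsub_apply] at *
                omega
              rw [hL, if_neg (fun h => h1 h.1), if_neg h1, if_neg hmI]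
              ring
        _ = MvPowerSeries.coeff e (Q * Φ) - MvPowerSeries.coeff e (Q * G) := by
            rw [hQΦ, hQG, Finset.sum_add_distrib, Finset.sum_sub_distrib, hE, add_zero]
    rw [map_sub]
    exact main ▸ hasSum_sum_of_ne_finset_zero h0
  exact Pi.hasSum.mpr key
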